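/- For integers k ≥ 2 and n ≥ k + 2, the signless Laplacian spectral radius of S_{n,k} satisfies q(S_{n,k}) > n + 2k - 2 - 2k^2/n. -/

import Mathlib

open SimpleGraph Finset

/-- The signless Laplacian matrix `Q(G) = D(G) + A(G)` over `ℝ`. -/
def signlessLaplacian {V : Type*} [Fintype V] [DecidableEq V] (G : SimpleGraph V)
    [DecidableRel G.Adj] : Matrix V V ℝ :=
  SimpleGraph.degMatrix ℝ G + G.adjMatrix ℝ

/-- `q` is the largest eigenvalue of the real matrix `M`. -/
def IsMaxEigenvalue {V : Type*} [Fintype V] [DecidableEq V] (M : Matrix V V ℝ) (q : ℝ) : Prop :=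
  Module.End.HasEigenvalue (Matrix.toLin' M) q ∧
    ∀ μ : ℝ, Module.End.HasEigenvalue (Matrix.toLin' M) μ → μ ≤ q

/-- `S_{n,k}`: the join of `K_k` with an empty graph on `n - k` vertices. -/
def Snk (n k : ℕ) : SimpleGraph (Fin n) where
  Adj u v := u ≠ v ∧ (u.val < k ∨ v.val < k)
  symm := ⟨fun u v ⟨h1, h2⟩ => ⟨h1.symm, h2.symm⟩⟩
  loopless := ⟨fun u ⟨h, _⟩ => h rfl⟩

instance (n k : ℕ) : DecidableRel (Snk n k).Adj := fun u v =>
  inferInstanceAs (Decidable (u ≠ v ∧ (u.val < k ∨ v.val < k)))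

/-- `S_{n,k}^+`: `S_{n,k}` plus one edge inside the independent set (between
vertices `k` and `k+1`). -/
def SnkPlus (n k : ℕ) : SimpleGraph (Fin n) where
  Adj u v := u ≠ v ∧ (u.val < k ∨ v.val < k ∨ (u.val ≤ k + 1 ∧ v.val ≤ k + 1))
  symm := ⟨fun u v ⟨h1, h2⟩ => ⟨h1.symm, by tauto⟩⟩
  loopless := ⟨fun u ⟨h, _⟩ => h rfl⟩

instance (n k : ℕ) : DecidableRel (SnkPlus n k).Adj := fun u v =>
  inferInstanceAs (Decidable (u ≠ v ∧ (u.val < k ∨ v.val < k ∨ (u.val ≤ k + 1 ∧ v.val ≤ k + 1))))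

/-- `T` is contained in `G` as a subgraph: there is an injective graph homomorphism. -/
def ContainsSub {α β : Type*} (T : SimpleGraph α) (G : SimpleGraph β) : Prop :=
  ∃ f : T →g G, Function.Injective f

lemma card_filter_val_lt (k n : ℕ) (hkn : k ≤ n) :
    (univ.filter (fun u : Fin n => (u:ℕ) < k)).card = k := by
  rw [← Fintype.card_subtype]
  exact Fintype.card_congr
    ⟨fun u => ⟨u.1, u.2⟩, fun i => ⟨⟨i, lt_of_lt_of_le i.2 hkn⟩, i.2⟩,
     fun u => rfl, fun i => rfl⟩ |>.trans (Fintype.card_fin k)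

lemma snk_nbhd_lt (k n : ℕ) (v : Fin n) (hv : (v:ℕ) < k) :
    (Snk n k).neighborFinset v = univ.erase v := by
  ext u
  rw [mem_neighborFinset]
  simp only [mem_neighborFinset, Snk, mem_erase, mem_univ, and_true]
  exact ⟨fun h => h.1.symm, fun h => ⟨h.symm, Or.inl hv⟩⟩

lemma snk_nbhd_ge (k n : ℕ) (v : Fin n) (hv : ¬ (v:ℕ) < k) :
    (Snk n k).neighborFinset v = univ.filter (fun u : Fin n => (u:ℕ) < k) := by
  ext u
  rw [mem_neighborFinset]
  simp only [mem_neighborFinset, Snk, mem_filter, mem_univ, true_and]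
  constructor
  · rintro ⟨h1, h2 | h2⟩
    · exact absurd h2 hv
    · exact h2
  · intro h
    exact ⟨fun e => hv (e ▸ h), Or.inr h⟩

theorem stmt_1 (k n : ℕ) (hk : 2 ≤ k) (hn : k + 2 ≤ n) (q : ℝ)
    (hq : IsMaxEigenvalue (signlessLaplacian (Snk n k)) q) :
    q > (n : ℝ) + 2 * k - 2 - 2 * (k : ℝ) ^ 2 / n := by
  have hkn : k ≤ n := by omega
  have hK2 : (2:ℝ) ≤ (k:ℝ) := by exact_mod_cast hk
  have hNK : (k:ℝ) + 2 ≤ (n:ℝ) := by exact_mod_cast hn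
  have hKpos : (0:ℝ) < (k:ℝ) := by linarith
  have hNpos : (0:ℝ) < (n:ℝ) := by linarith
  have hD0 : (0:ℝ) ≤ ((n:ℝ) + 2*(k:ℝ) - 2)^2 - 8*(k:ℝ)*((k:ℝ)-1) := by nlinarith
  have hr0 : 0 ≤ Real.sqrt (((n:ℝ) + 2*(k:ℝ) - 2)^2 - 8*(k:ℝ)*((k:ℝ)-1)) :=
    Real.sqrt_nonneg _
  have hr2 : Real.sqrt (((n:ℝ) + 2*(k:ℝ) - 2)^2 - 8*(k:ℝ)*((k:ℝ)-1)) ^ 2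
      = ((n:ℝ) + 2*(k:ℝ) - 2)^2 - 8*(k:ℝ)*((k:ℝ)-1) := Real.sq_sqrt hD0
  set R : ℝ := Real.sqrt (((n:ℝ) + 2*(k:ℝ) - 2)^2 - 8*(k:ℝ)*((k:ℝ)-1)) with hRdef
  set lam : ℝ := (((n:ℝ) + 2*(k:ℝ) - 2) + R)/2 with hlamdef
  have hquad : lam^2 - ((n:ℝ) + 2*(k:ℝ) - 2)*lam + 2*(k:ℝ)*((k:ℝ)-1) = 0 := by
    linear_combination (lam + (R - ((n:ℝ) + 2*(k:ℝ) - 2))/2) * hlamdef + hr2/4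
  have hlamK : (k:ℝ) < lam := by
    rw [hlamdef]; linarith
  set a : ℝ := (lam - (k:ℝ))/(k:ℝ) with hadef
  have haK : (k:ℝ) * a = lam - (k:ℝ) := by
    rw [hadef]; field_simp
  set x : Fin n → ℝ := fun u => if (u:ℕ) < k then a else 1 with hxdef
  have hcard : (univ.filter (fun u : Fin n => (u:ℕ) < k)).card = k :=
    card_filter_val_lt k n hkn
  have hcard' : (univ.filter (fun u : Fin n => ¬ (u:ℕ) < k)).card = n - k := by
    have := Finset.card_filter_add_card_filter_not
      (s := (univ : Finset (Fin n))) (p := fun u : Fin n => (u:ℕ) < k)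
    simp only [Finset.card_univ, Fintype.card_fin] at this
    omega
  have hsum : ∑ u : Fin n, x u = (k:ℝ) * a + ((n:ℝ) - (k:ℝ)) := by
    rw [hxdef]
    rw [Finset.sum_ite, Finset.sum_const, Finset.sum_const, hcard, hcard']
    have hc : ((n - k : ℕ) : ℝ) = (n:ℝ) - (k:ℝ) := Nat.cast_sub hkn
    simp only [nsmul_eq_mul, hc, mul_one]
  have hfilsum : ∑ u ∈ univ.filter (fun u : Fin n => (u:ℕ) < k), x u = (k:ℝ) * a := by
    have h1 : ∀ u ∈ univ.filter (fun u : Fin n => (u:ℕ) < k), x u = a := by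
      intro u hu
      simp only [Finset.mem_filter] at hu
      rw [hxdef]
      simp [hu.2]
    rw [Finset.sum_congr rfl h1, Finset.sum_const, hcard, nsmul_eq_mul]
  have key : (signlessLaplacian (Snk n k)).mulVec x = lam • x := by
    ext v
    rw [signlessLaplacian, Matrix.add_mulVec]
    simp only [Pi.add_apply, Pi.smul_apply, smul_eq_mul,
      SimpleGraph.degMatrix_mulVec_apply, SimpleGraph.adjMatrix_mulVec_apply]
    by_cases hv : (v:ℕ) < k
    · have hdeg : (Snk n k).degree v = n - 1 := by
        rw [SimpleGraph.degree, snk_nbhd_lt k n v hv,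
          Finset.card_erase_of_mem (Finset.mem_univ v), Finset.card_univ,
          Fintype.card_fin]
      have hxv : x v = a := by rw [hxdef]; simp [hv]
      have hesum : ∑ u ∈ (Snk n k).neighborFinset v, x u
          = ((k:ℝ) * a + ((n:ℝ) - (k:ℝ))) - a := by
        rw [snk_nbhd_lt k n v hv, Finset.sum_erase_eq_sub (Finset.mem_univ v), hsum, hxv]
      rw [hdeg, hxv, hesum]
      have hcast : ((n - 1 : ℕ) : ℝ) = (n:ℝ) - 1 := Nat.cast_pred (by omega)
      rw [hcast]
      -- ((n:ℝ)-1)*a + ((k*a + (n-k)) - a) = lam * a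
      have hG : (k:ℝ) * ((((n:ℝ))-1)*a + (((k:ℝ)*a + ((n:ℝ)-(k:ℝ))) - a) - lam*a) = 0 := by
        linear_combination ((n:ℝ)+(k:ℝ)-2-lam) * haK - hquad
      have h0 := (mul_eq_zero.mp hG).resolve_left (ne_of_gt hKpos)
      linarith
    · have hdeg : (Snk n k).degree v = k := by
        rw [SimpleGraph.degree, snk_nbhd_ge k n v hv, hcard]
      have hxv : x v = 1 := by rw [hxdef]; simp [hv]
      rw [hdeg, hxv, snk_nbhd_ge k n v hv, hfilsum]
      -- (k:ℝ) * 1 + k * a = lam * 1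
      linarith [haK]
  have hxne : x ≠ 0 := by
    intro h
    have hkn' : k < n := by omega
    have h1 : x ⟨k, hkn'⟩ = 0 := by rw [h]; rfl
    rw [hxdef] at h1
    simp at h1
  have heig : Module.End.HasEigenvalue
      (Matrix.toLin' (signlessLaplacian (Snk n k))) lam := by
    apply Module.End.hasEigenvalue_of_hasEigenvector (x := x)
    refine ⟨?_, hxne⟩
    rw [Module.End.mem_eigenspace_iff, Matrix.toLin'_apply, key]
  have hqlam : lam ≤ q := hq.2 lam heig
  -- final algebra
  have hbr : (0:ℝ) < (n:ℝ)^2 + 2*(k:ℝ)*((k:ℝ)-1)*(n:ℝ) - 2*(k:ℝ)^3 := by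
    nlinarith [mul_nonneg (mul_nonneg hKpos.le (by linarith : (0:ℝ) ≤ (k:ℝ)-1))
      (by linarith : (0:ℝ) ≤ (n:ℝ)-((k:ℝ)+2)), sq_nonneg ((n:ℝ))]
  have hDgt : (((n:ℝ)+2*(k:ℝ)-2)*(n:ℝ) - 4*(k:ℝ)^2)^2
      < (((n:ℝ)+2*(k:ℝ)-2)^2 - 8*(k:ℝ)*((k:ℝ)-1)) * (n:ℝ)^2 := by
    nlinarith [mul_pos hKpos hbr]
  have h1 : (((n:ℝ)+2*(k:ℝ)-2) - 4*(k:ℝ)^2/(n:ℝ)) * (n:ℝ)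
      = ((n:ℝ)+2*(k:ℝ)-2)*(n:ℝ) - 4*(k:ℝ)^2 := by
    field_simp
  have h2 : ((((n:ℝ)+2*(k:ℝ)-2) - 4*(k:ℝ)^2/(n:ℝ)) * (n:ℝ))^2 < (R * (n:ℝ))^2 := by
    rw [h1, mul_pow, hr2]
    exact hDgt
  have h3 : (((n:ℝ)+2*(k:ℝ)-2) - 4*(k:ℝ)^2/(n:ℝ)) * (n:ℝ) < R * (n:ℝ) := by
    exact lt_of_pow_lt_pow_left₀ 2 (mul_nonneg hr0 hNpos.le) h2
  have hRgt : ((n:ℝ)+2*(k:ℝ)-2) - 4*(k:ℝ)^2/(n:ℝ) < R :=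
    lt_of_mul_lt_mul_right (by linarith [h3]) hNpos.le
  have hfin : (n:ℝ) + 2*(k:ℝ) - 2 - 2*(k:ℝ)^2/(n:ℝ) < lam := by
    rw [hlamdef]
    have : 2*(k:ℝ)^2/(n:ℝ) = (4*(k:ℝ)^2/(n:ℝ))/2 := by ring
    linarith
  linarith
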